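/- Let G be a finitely generated pro-p group. Then (G, Φ(G), [G,G]) is a hierarchical triple if and only if the abelianization G^{ab} has no direct cyclic factor of order p. In particular, if G^{ab} is torsion-free, then (G, Φ(G), [G,G]) is hierarchical. -/

import Mathlib

/-- A pro-`p` group: a compact Hausdorff totally disconnected topological group in which
every open normal subgroup has index a power of `p`. -/
def IsProPGroup (p : ℕ) (G : Type*) [Group G] [TopologicalSpace G] [IsTopologicalGroup G] : Prop :=
  CompactSpace G ∧ T2Space G ∧ TotallyDisconnectedSpace G ∧
    ∀ U : Subgroup G, U.Normal → IsOpen (U : Set G) → ∃ n : ℕ, U.index = p ^ n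

/-- The Frattini subgroup of a subgroup `H` of `G`, viewed as a subgroup of `G`:
the intersection of all maximal open subgroups of `H` (taken inside `H`), mapped into `G`. -/
def frattiniOf {G : Type*} [Group G] [TopologicalSpace G] (H : Subgroup G) : Subgroup G :=
  (⨅ M ∈ {M : Subgroup ↥H | IsOpen (M : Set ↥H) ∧ IsCoatom M}, M).map H.subtype

/-- `H` is topologically finitely generated. -/
def TopFG {G : Type*} [Group G] [TopologicalSpace G] [IsTopologicalGroup G] (H : Subgroup G) : Prop :=
  ∃ S : Finset G, (Subgroup.closure (S : Set G)).topologicalClosure = H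

/-- The minimal number of topological generators of `H`. -/
noncomputable def genNum {G : Type*} [Group G] [TopologicalSpace G] [IsTopologicalGroup G]
    (H : Subgroup G) : ℕ :=
  sInf {n | ∃ S : Finset G, S.card = n ∧ (Subgroup.closure (S : Set G)).topologicalClosure = H}

/-- `G` is Frattini-injective: distinct finitely generated closed subgroups have
distinct Frattini subgroups. -/
def FrattiniInjective (G : Type*) [Group G] [TopologicalSpace G] [IsTopologicalGroup G] : Prop :=
  ∀ H K : Subgroup G, IsClosed (H : Set G) → IsClosed (K : Set G) → TopFG H → TopFG K →
    frattiniOf H = frattiniOf K → H = K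

/-- `(G, K, H)` is a hierarchical triple: `x ^ p ∈ H` implies `x ∈ K`. -/
def Hierarchical (p : ℕ) {G : Type*} [Group G] (K H : Subgroup G) : Prop :=
  ∀ x : G, x ^ p ∈ H → x ∈ K

/-- `G` is Frattini-resistant: `(G, H, Φ(H))` is hierarchical for every finitely generated
closed subgroup `H`. -/
def FrattiniResistant (p : ℕ) (G : Type*) [Group G] [TopologicalSpace G] [IsTopologicalGroup G] :
    Prop :=
  ∀ H : Subgroup G, IsClosed (H : Set G) → TopFG H → Hierarchical p H (frattiniOf H)

/-- The closed commutator subgroup of `H`, as a subgroup of the ambient group. -/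
def commClosure {G : Type*} [Group G] [TopologicalSpace G] [IsTopologicalGroup G]
    (H : Subgroup G) : Subgroup G :=
  (⁅H, H⁆ : Subgroup G).topologicalClosure

instance commClosure_top_normal {G : Type*} [Group G] [TopologicalSpace G]
    [IsTopologicalGroup G] : (commClosure (⊤ : Subgroup G)).Normal :=
  Subgroup.is_normal_topologicalClosure _

/-- The old Mathlib `Monoid.IsTorsionFree` (removed since): no nontrivial element has
finite order. -/
def Monoid.IsTorsionFree (G : Type*) [Monoid G] : Prop :=
  ∀ g : G, g ≠ 1 → ¬IsOfFinOrder g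

open Subgroup Pointwise

set_option linter.unusedSectionVars false

section CoatomHelpers
variable {G H : Type*} [Group G] [Group H]

lemma my_isCoatom_comap_of_surjective {f : G →* H} (hf : Function.Surjective f)
    {K : Subgroup H} (h : IsCoatom K) : IsCoatom (K.comap f) := by
  constructor
  · intro htop
    apply h.1
    rw [← Subgroup.map_comap_eq_self_of_surjective hf K, htop,
      ← Subgroup.comap_top f, Subgroup.map_comap_eq_self_of_surjective hf]
  · intro L hL
    have hker : f.ker ≤ L := le_trans (Subgroup.ker_le_comap f K) hL.le
    have hKle : K ≤ L.map f := by
      rw [← Subgroup.map_comap_eq_self_of_surjective hf K]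
      exact Subgroup.map_mono hL.le
    have hKlt : K < L.map f := by
      refine lt_of_le_of_ne hKle fun hEq => hL.ne' ?_
      rw [← Subgroup.comap_map_eq_self hker, ← hEq]
    have := h.2 _ hKlt
    rw [← Subgroup.comap_map_eq_self hker, this, Subgroup.comap_top]

lemma my_isCoatom_map_of_surjective {f : G →* H} (hf : Function.Surjective f)
    {M : Subgroup G} (hker : f.ker ≤ M) (h : IsCoatom M) : IsCoatom (M.map f) := by
  have hmaptop : Subgroup.map f ⊤ = ⊤ := by
    rw [← top_le_iff]
    intro y _
    obtain ⟨x, rfl⟩ := hf y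
    exact ⟨x, trivial, rfl⟩
  constructor
  · intro htop
    apply h.1
    rw [← Subgroup.comap_map_eq_self hker, htop, Subgroup.comap_top]
  · intro L hL
    have hMle : M ≤ L.comap f := by
      rw [← Subgroup.comap_map_eq_self hker]
      exact Subgroup.comap_mono hL.le
    have hMlt : M < L.comap f := by
      refine lt_of_le_of_ne hMle fun hEq => hL.ne' ?_
      rw [← Subgroup.map_comap_eq_self_of_surjective hf L, ← hEq]
    have := h.2 _ hMlt
    rw [← Subgroup.map_comap_eq_self_of_surjective hf L, this, hmaptop]

end CoatomHelpers

section Frattini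
variable {G : Type*} [Group G] [TopologicalSpace G]

lemma top_subtype_surjective : Function.Surjective (⊤ : Subgroup G).subtype :=
  fun g => ⟨⟨g, trivial⟩, rfl⟩

lemma mem_frattiniOf_top_iff {x : G} :
    x ∈ frattiniOf (⊤ : Subgroup G) ↔
      ∀ M : Subgroup G, IsOpen (M : Set G) → IsCoatom M → x ∈ M := by
  have hOE : Topology.IsOpenEmbedding ((↑) : ↥(⊤ : Subgroup G) → G) := by
    have : IsOpen (((⊤ : Subgroup G) : Set G)) := by
      rw [Subgroup.coe_top]; exact isOpen_univ
    exact this.isOpenEmbedding_subtypeVal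
  constructor
  · rintro ⟨y, hy, rfl⟩ M hMopen hMco
    rw [SetLike.mem_coe, Subgroup.mem_iInf] at hy
    have h1 : IsOpen ((M.comap (⊤ : Subgroup G).subtype : Subgroup ↥(⊤ : Subgroup G)) :
        Set ↥(⊤ : Subgroup G)) := by
      rw [Subgroup.coe_comap]
      exact hMopen.preimage continuous_subtype_val
    have := hy (M.comap (⊤ : Subgroup G).subtype)
    rw [Subgroup.mem_iInf] at this
    exact this ⟨h1, my_isCoatom_comap_of_surjective top_subtype_surjective hMco⟩
  · intro hx
    refine ⟨⟨x, trivial⟩, ?_, rfl⟩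
    rw [SetLike.mem_coe, Subgroup.mem_iInf]
    intro M'
    rw [Subgroup.mem_iInf]
    rintro ⟨hopen, hco⟩
    have hMopen : IsOpen ((M'.map (⊤ : Subgroup G).subtype : Subgroup G) : Set G) := by
      rw [Subgroup.coe_map, Subgroup.coe_subtype]
      exact hOE.isOpenMap _ hopen
    have hMco : IsCoatom (M'.map (⊤ : Subgroup G).subtype) :=
      my_isCoatom_map_of_surjective top_subtype_surjective
        (by rw [Subgroup.ker_subtype]; exact bot_le) hco
    obtain ⟨y, hy, hyx⟩ := hx _ hMopen hMco
    have : y = ⟨x, trivial⟩ := Subtype.ext hyx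
    rwa [this] at hy
end Frattini

section ExponentP
variable {p : ℕ} {E : Type*} [Group E]

lemma my_all_normal (hcomm : ∀ a b : E, a * b = b * a) (S : Subgroup E) : S.Normal := by
  constructor
  intro a ha g
  have : g * a * g⁻¹ = a := by rw [hcomm g a, mul_assoc, mul_inv_cancel, mul_one]
  rwa [this]

lemma my_exists_coatom_not_mem [Finite E] (hp : p.Prime)
    (hcomm : ∀ a b : E, a * b = b * a) (hexp : ∀ e : E, e ^ p = 1)
    {v : E} (hv : v ≠ 1) : ∃ K : Subgroup E, IsCoatom K ∧ v ∉ K := by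
  have hfin : Finite (Subgroup E) :=
    Finite.of_injective (fun K : Subgroup E => (K : Set E)) SetLike.coe_injective
  obtain ⟨K, hKs, hKmax⟩ := Set.Finite.exists_maximalFor id {K : Subgroup E | v ∉ K}
    (Set.toFinite _) ⟨⊥, by simpa using hv⟩
  simp only [id] at hKmax
  refine ⟨K, ⟨fun htop => hKs (htop ▸ Subgroup.mem_top v), fun L hL => ?_⟩, hKs⟩
  have hvL : v ∈ L := by
    by_contra hvL
    exact hL.ne (le_antisymm hL.le (hKmax hvL hL.le))
  rw [eq_top_iff']
  intro w
  by_contra hw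
  have hwK : w ∉ K := fun h => hw (hL.le h)
  have hvKw : v ∈ K ⊔ Subgroup.zpowers w := by
    by_contra hns
    have := le_antisymm le_sup_left (hKmax hns le_sup_left)
    exact hwK (this ▸ (le_sup_right : Subgroup.zpowers w ≤ K ⊔ Subgroup.zpowers w)
      (Subgroup.mem_zpowers w))
  haveI := my_all_normal hcomm (Subgroup.zpowers w)
  rw [← SetLike.mem_coe, Subgroup.mul_normal] at hvKw
  obtain ⟨k, hk, z, hz, hkz⟩ := hvKw
  obtain ⟨n, rfl⟩ := Subgroup.mem_zpowers_iff.mp hz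
  by_cases hdvd : (p : ℤ) ∣ n
  · obtain ⟨m, rfl⟩ := hdvd
    rw [zpow_mul, zpow_natCast, hexp, one_zpow] at hkz
    simp only [mul_one] at hkz
    exact hKs (hkz ▸ (SetLike.mem_coe.mp hk))
  · have hcop : IsCoprime (n : ℤ) (p : ℤ) := by
      rw [Int.isCoprime_iff_gcd_eq_one]
      have h1 : ¬ p ∣ n.natAbs := fun h => hdvd (Int.dvd_natAbs.mp (Int.natCast_dvd_natCast.mpr h))
      have h2 := ((Nat.Prime.coprime_iff_not_dvd hp).mpr h1).symm
      simpa [Int.gcd, Int.natAbs_natCast] using h2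
    obtain ⟨a, b, hab⟩ := hcop
    have hwnL : w ^ n ∈ L := by
      have hkL : k ∈ L := hL.le hk
      have : w ^ n = k⁻¹ * v := by rw [← hkz, inv_mul_cancel_left]
      rw [this]
      exact mul_mem (inv_mem hkL) hvL
    have hwL : w ∈ L := by
      have : w = (w ^ n) ^ a * (w ^ (p : ℤ)) ^ b := by
        rw [← zpow_mul, ← zpow_mul, ← zpow_add, mul_comm n a, mul_comm (p : ℤ) b, hab, zpow_one]
      rw [this]
      have hwp : w ^ (p : ℤ) = 1 := by rw [zpow_natCast, hexp]
      rw [hwp, one_zpow, mul_one]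
      exact zpow_mem hwnL a
    exact hw hwL

lemma my_exists_orderOf_eq_prime {Q : Type*} [Group Q] (hp : p.Prime)
    (h : IsPGroup p Q) [Nontrivial Q] : ∃ g : Q, orderOf g = p := by
  haveI : Fact p.Prime := ⟨hp⟩
  obtain ⟨q, hq⟩ := exists_ne (1 : Q)
  obtain ⟨k, hk⟩ := h q
  induction k generalizing q with
  | zero => simp at hk; exact absurd hk hq
  | succ k ih =>
    by_cases hr : q ^ (p ^ k) = 1
    · exact ih q hq hr
    · refine ⟨q ^ (p ^ k), orderOf_eq_prime ?_ hr⟩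
      rw [← pow_mul, ← pow_succ]
      exact hk
end ExponentP

lemma my_map_top {G H : Type*} [Group G] [Group H] {f : G →* H} (hf : Function.Surjective f) :
    Subgroup.map f ⊤ = ⊤ := by
  rw [← top_le_iff]
  intro y _
  obtain ⟨x, rfl⟩ := hf y
  exact ⟨x, trivial, rfl⟩

section OpenCoatom
variable {p : ℕ} {G : Type*} [Group G] [TopologicalSpace G] [IsTopologicalGroup G]

lemma my_open_coatom_props [CompactSpace G] (hp : p.Prime)
    (hidx : ∀ U : Subgroup G, U.Normal → IsOpen (U : Set G) → ∃ n : ℕ, U.index = p ^ n)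
    {M : Subgroup G} (hopen : IsOpen (M : Set G)) (hco : IsCoatom M) :
    M.Normal ∧ Nat.card (G ⧸ M) = p := by
  haveI : Fact p.Prime := ⟨hp⟩
  haveI hfinM : Finite (G ⧸ M) := Subgroup.quotient_finite_of_isOpen M hopen
  haveI : M.FiniteIndex := M.finiteIndex_of_finite_quotient
  set U := M.normalCore with hU
  haveI : U.FiniteIndex := M.finiteIndex_normalCore
  haveI : U.Normal := M.normalCore_normal
  have hUclosed : IsClosed (U : Set G) :=
    Subgroup.normalCore_isClosed M (M.isClosed_of_isOpen hopen)
  have hUopen : IsOpen (U : Set G) := Subgroup.isOpen_of_isClosed_of_finiteIndex U hUclosed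
  haveI : Finite (G ⧸ U) := Subgroup.quotient_finite_of_isOpen U hUopen
  obtain ⟨n, hn⟩ := hidx U inferInstance hUopen
  have hcard : Nat.card (G ⧸ U) = p ^ n := by rw [← hn]; rfl
  have hPQ : IsPGroup p (G ⧸ U) := IsPGroup.of_card hcard
  haveI : Group.IsNilpotent (G ⧸ U) := hPQ.isNilpotent
  have hker : (QuotientGroup.mk' U).ker ≤ M := by
    rw [QuotientGroup.ker_mk']; exact M.normalCore_le
  have hsurj := QuotientGroup.mk'_surjective U
  set Mb := M.map (QuotientGroup.mk' U) with hMb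
  have hMbco : IsCoatom Mb := my_isCoatom_map_of_surjective hsurj hker hco
  haveI hMbnormal : Mb.Normal := by
    rw [← Subgroup.normalizer_eq_top_iff]
    exact hMbco.2 _ (normalizerCondition_of_isNilpotent _ (lt_top_iff_ne_top.mpr hMbco.1))
  have hMeq : Mb.comap (QuotientGroup.mk' U) = M := Subgroup.comap_map_eq_self hker
  haveI hMnormal : M.Normal := hMeq ▸ hMbnormal.comap _
  refine ⟨hMnormal, ?_⟩
  have hUM : U ≤ M := M.normalCore_le
  haveI : Nontrivial ((G ⧸ U) ⧸ Mb) := by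
    obtain ⟨q, hq⟩ : ∃ q, q ∉ Mb := by
      by_contra h; push_neg at h; exact hMbco.1 ((Subgroup.eq_top_iff' Mb).mpr h)
    exact ⟨⟨QuotientGroup.mk q, 1, fun h => hq ((QuotientGroup.eq_one_iff q).mp h)⟩⟩
  have hPQ2 : IsPGroup p ((G ⧸ U) ⧸ Mb) := hPQ.to_quotient Mb
  obtain ⟨g, hg⟩ := my_exists_orderOf_eq_prime hp hPQ2
  have htriv : ∀ S : Subgroup ((G ⧸ U) ⧸ Mb), S = ⊥ ∨ S = ⊤ := by
    intro S
    have hMble : Mb ≤ S.comap (QuotientGroup.mk' Mb) := fun x hx => by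
      have h1 : (QuotientGroup.mk' Mb) x = 1 := (QuotientGroup.eq_one_iff x).mpr hx
      simp only [Subgroup.mem_comap, h1]
      exact S.one_mem
    rcases eq_or_lt_of_le hMble with heq | hlt
    · left
      rw [← Subgroup.map_comap_eq_self_of_surjective (QuotientGroup.mk'_surjective Mb) S, ← heq]
      rw [eq_bot_iff]
      rintro y ⟨m, hm, rfl⟩
      simpa [Subgroup.mem_bot, QuotientGroup.eq_one_iff] using hm
    · right
      have h2 := hMbco.2 _ hlt
      rw [← Subgroup.map_comap_eq_self_of_surjective (QuotientGroup.mk'_surjective Mb) S, h2]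
      exact my_map_top (QuotientGroup.mk'_surjective Mb)
  have hgtop : Subgroup.zpowers g = ⊤ := by
    rcases htriv (Subgroup.zpowers g) with h | h
    · exfalso
      have : g = 1 := Subgroup.zpowers_eq_bot.mp h
      rw [this, orderOf_one] at hg
      exact hp.ne_one hg.symm
    · exact h
  have hcard2 : Nat.card ((G ⧸ U) ⧸ Mb) = p := by
    rw [← Subgroup.card_top (G := (G ⧸ U) ⧸ Mb), ← hgtop, Nat.card_zpowers, hg]
  have e := QuotientGroup.quotientQuotientEquivQuotient U M hUM
  rw [← Nat.card_congr e.toEquiv]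
  exact hcard2

lemma my_card_p_props {p : ℕ} {G : Type*} [Group G] (hp : p.Prime) {M : Subgroup G} [M.Normal]
    (hcard : Nat.card (G ⧸ M) = p) :
    (∀ g : G, g ^ p ∈ M) ∧ (∀ g h : G, g * h * g⁻¹ * h⁻¹ ∈ M) := by
  haveI : Fact p.Prime := ⟨hp⟩
  constructor
  · intro g
    have h1 : ((QuotientGroup.mk' M) g) ^ p = 1 := by rw [← hcard, pow_card_eq_one']
    have h2 : (QuotientGroup.mk' M) (g ^ p) = 1 := by rw [map_pow, h1]
    exact (QuotientGroup.eq_one_iff _).mp h2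
  · intro g h
    haveI := isCyclic_of_prime_card hcard
    have hcomm : ∀ a b : G ⧸ M, a * b = b * a := fun a b =>
      (IsCyclic.commGroup (α := G ⧸ M)).mul_comm a b
    have h2 : (QuotientGroup.mk' M) (g * h * g⁻¹ * h⁻¹) = 1 := by
      rw [map_mul, map_mul, map_mul, map_inv, map_inv,
        hcomm ((QuotientGroup.mk' M) g) ((QuotientGroup.mk' M) h)]
      group
    exact (QuotientGroup.eq_one_iff _).mp h2

end OpenCoatom

section ProfiniteSep
variable {p : ℕ} {G : Type*} [Group G] [TopologicalSpace G] [IsTopologicalGroup G]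

lemma my_exists_openNormal_avoiding [CompactSpace G] [T2Space G] [TotallyDisconnectedSpace G]
    {W : Subgroup G} (hW : IsClosed (W : Set G)) {x : G} (hx : x ∉ W) :
    ∃ U : Subgroup G, U.Normal ∧ IsOpen (U : Set G) ∧ x ∉ U ⊔ W := by
  have hV : IsOpen ((fun g => g * x) ⁻¹' (↑W)ᶜ) :=
    (hW.isOpen_compl).preimage (continuous_mul_right x)
  have h1V : (1 : G) ∈ (fun g => g * x) ⁻¹' (↑W)ᶜ := by
    simp only [Set.mem_preimage, one_mul, Set.mem_compl_iff, SetLike.mem_coe]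
    exact hx
  obtain ⟨C, hCclopen, h1C, hCV⟩ := compact_exists_isClopen_in_isOpen hV h1V
  obtain ⟨H, hH⟩ := IsTopologicalGroup.exist_openNormalSubgroup_sub_clopen_nhds_of_one hCclopen h1C
  refine ⟨H.toOpenSubgroup.toSubgroup, H.isNormal', H.toOpenSubgroup.isOpen, ?_⟩
  intro hmem
  rw [← SetLike.mem_coe, Subgroup.normal_mul] at hmem
  obtain ⟨u, hu, w, hw, huw⟩ := hmem
  have hwx : u⁻¹ * x ∈ (W : Set G) := by
    have : u⁻¹ * x = w := by rw [← huw]; group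
    rw [this]; exact hw
  have hu' : u⁻¹ ∈ (H.toOpenSubgroup.toSubgroup : Set G) := inv_mem hu
  exact (hCV (hH hu')) hwx

lemma my_frattini_le [CompactSpace G] [T2Space G] [TotallyDisconnectedSpace G] (hp : p.Prime)
    {W : Subgroup G} (hW : IsClosed (W : Set G)) (hpow : ∀ g : G, g ^ p ∈ W)
    (hcommW : ∀ g h : G, g * h * g⁻¹ * h⁻¹ ∈ W) {x : G}
    (hx : x ∈ frattiniOf (⊤ : Subgroup G)) : x ∈ W := by
  by_contra hxW
  obtain ⟨U, hUnormal, hUopen, hxUW⟩ := my_exists_openNormal_avoiding hW hxW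
  haveI := hUnormal
  set M₀ := U ⊔ W with hM₀
  have hM₀open : IsOpen (M₀ : Set G) := Subgroup.isOpen_mono le_sup_left hUopen
  have hM₀pow : ∀ g : G, g ^ p ∈ M₀ := fun g => (le_sup_right : W ≤ U ⊔ W) (hpow g)
  have hM₀comm : ∀ g h : G, g * h * g⁻¹ * h⁻¹ ∈ M₀ := fun g h => (le_sup_right : W ≤ U ⊔ W) (hcommW g h)
  haveI hM₀normal : M₀.Normal := by
    constructor
    intro m hm g
    have h1 : g * m * g⁻¹ * m⁻¹ ∈ M₀ := hM₀comm g m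
    have h2 : g * m * g⁻¹ = g * m * g⁻¹ * m⁻¹ * m := by group
    rw [h2]; exact mul_mem h1 hm
  haveI : Finite (G ⧸ M₀) := Subgroup.quotient_finite_of_isOpen M₀ hM₀open
  have hcomm : ∀ a b : G ⧸ M₀, a * b = b * a := by
    intro a b
    obtain ⟨g, rfl⟩ := QuotientGroup.mk'_surjective M₀ a
    obtain ⟨h, rfl⟩ := QuotientGroup.mk'_surjective M₀ b
    rw [← map_mul, ← map_mul]
    show (QuotientGroup.mk (g * h) : G ⧸ M₀) = QuotientGroup.mk (h * g)
    have hmem := hM₀comm h⁻¹ g⁻¹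
    simp only [inv_inv] at hmem
    have heq : (g * h)⁻¹ * (h * g) = h⁻¹ * g⁻¹ * h * g := by group
    exact QuotientGroup.eq.mpr (heq ▸ hmem)
  have hexp : ∀ e : G ⧸ M₀, e ^ p = 1 := by
    intro e
    obtain ⟨g, rfl⟩ := QuotientGroup.mk'_surjective M₀ e
    rw [← map_pow]
    exact (QuotientGroup.eq_one_iff _).mpr (hM₀pow g)
  have hv : (QuotientGroup.mk' M₀) x ≠ 1 := fun h => hxUW ((QuotientGroup.eq_one_iff x).mp h)
  obtain ⟨K, hKco, hvK⟩ := my_exists_coatom_not_mem hp hcomm hexp hv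
  have hM₀le : M₀ ≤ K.comap (QuotientGroup.mk' M₀) := fun m hm => by
    have h1 : (QuotientGroup.mk' M₀) m = 1 := (QuotientGroup.eq_one_iff m).mpr hm
    simp only [Subgroup.mem_comap, h1]
    exact K.one_mem
  have hMopen : IsOpen ((K.comap (QuotientGroup.mk' M₀) : Subgroup G) : Set G) :=
    Subgroup.isOpen_mono hM₀le hM₀open
  have hMco : IsCoatom (K.comap (QuotientGroup.mk' M₀)) :=
    my_isCoatom_comap_of_surjective (QuotientGroup.mk'_surjective M₀) hKco
  exact hvK (mem_frattiniOf_top_iff.mp hx _ hMopen hMco)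

end ProfiniteSep

def myPowSubgroup (p : ℕ) (A : Type*) [Group A] (hcomm : ∀ a b : A, a * b = b * a) :
    Subgroup A where
  carrier := Set.range fun a : A => a ^ p
  one_mem' := ⟨1, one_pow p⟩
  mul_mem' := by
    rintro _ _ ⟨a, rfl⟩ ⟨b, rfl⟩
    exact ⟨a * b, by show (a * b) ^ p = a ^ p * b ^ p
                     rw [(show Commute a b from hcomm a b).mul_pow]⟩
  inv_mem' := by
    rintro _ ⟨a, rfl⟩
    exact ⟨a⁻¹, by show a⁻¹ ^ p = (a ^ p)⁻¹
                   rw [inv_pow]⟩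

/-- For a finitely generated pro-`p` group `G`, the triple
`(G, Φ(G), [G,G])` is hierarchical iff the abelianization `G/[G,G]` has no direct cyclic
factor of order `p`; in particular, it is hierarchical whenever the abelianization is
torsion-free. -/
theorem stmt_14 {p : ℕ} (hp : p.Prime) (G : Type*) [Group G] [TopologicalSpace G]
    [IsTopologicalGroup G] (hG : IsProPGroup p G) (hfg : TopFG (⊤ : Subgroup G)) :
    (Hierarchical p (frattiniOf (⊤ : Subgroup G)) (commClosure (⊤ : Subgroup G)) ↔
      ¬ ∃ C B : Subgroup (G ⧸ commClosure (⊤ : Subgroup G)),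
          IsCompl C B ∧ Nat.card C = p) ∧
    (Monoid.IsTorsionFree (G ⧸ commClosure (⊤ : Subgroup G)) →
      Hierarchical p (frattiniOf (⊤ : Subgroup G)) (commClosure (⊤ : Subgroup G))) := by
  obtain ⟨hcompact, ht2, htd, hidx⟩ := hG
  haveI := hcompact; haveI := ht2; haveI := htd
  haveI : Fact p.Prime := ⟨hp⟩
  haveI hNclosed : IsClosed ((commClosure (⊤ : Subgroup G) : Subgroup G) : Set G) :=
    Subgroup.isClosed_topologicalClosure _
  have hcommG : ∀ g h : G, g * h * g⁻¹ * h⁻¹ ∈ commClosure (⊤ : Subgroup G) := by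
    intro g h
    have h1 := Subgroup.commutator_mem_commutator (Subgroup.mem_top g) (Subgroup.mem_top h)
    rw [commutatorElement_def] at h1
    exact Subgroup.le_topologicalClosure _ h1
  have hAcomm : ∀ a b : G ⧸ commClosure (⊤ : Subgroup G), a * b = b * a := by
    intro a b
    obtain ⟨g, rfl⟩ := QuotientGroup.mk'_surjective _ a
    obtain ⟨h, rfl⟩ := QuotientGroup.mk'_surjective _ b
    rw [← map_mul, ← map_mul]
    show (QuotientGroup.mk (g * h) : G ⧸ _) = QuotientGroup.mk (h * g)
    have hmem := hcommG h⁻¹ g⁻¹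
    simp only [inv_inv] at hmem
    have heq : (g * h)⁻¹ * (h * g) = h⁻¹ * g⁻¹ * h * g := by group
    exact QuotientGroup.eq.mpr (heq ▸ hmem)
  -- helper: any C, B complement with card C = p yields contradictions later
  have hiff : Hierarchical p (frattiniOf (⊤ : Subgroup G)) (commClosure (⊤ : Subgroup G)) ↔
      ¬ ∃ C B : Subgroup (G ⧸ commClosure (⊤ : Subgroup G)),
          IsCompl C B ∧ Nat.card C = p := by
    constructor
    · intro hH
      rintro ⟨C, B, hcompl, hcard⟩
      haveI : Finite C := Nat.finite_of_card_ne_zero (by rw [hcard]; exact hp.pos.ne')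
      haveI : Nontrivial C := Finite.one_lt_card_iff_nontrivial.mp (by rw [hcard]; exact hp.one_lt)
      obtain ⟨c, hc1⟩ := exists_ne (1 : C)
      have hcpC : c ^ p = 1 := by rw [← hcard]; exact pow_card_eq_one'
      have hcp : (c : G ⧸ commClosure (⊤ : Subgroup G)) ^ p = 1 := by
        rw [← SubgroupClass.coe_pow, hcpC, OneMemClass.coe_one]
      obtain ⟨x, hxc⟩ := QuotientGroup.mk'_surjective _ (c : G ⧸ commClosure (⊤ : Subgroup G))
      have hxpN : x ^ p ∈ commClosure (⊤ : Subgroup G) := by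
        have h1 : (QuotientGroup.mk' (commClosure (⊤ : Subgroup G))) (x ^ p) = 1 := by
          rw [map_pow, hxc, hcp]
        exact (QuotientGroup.eq_one_iff _).mp h1
      have hxPhi : x ∈ frattiniOf (⊤ : Subgroup G) := hH x hxpN
      set S := myPowSubgroup p (G ⧸ commClosure (⊤ : Subgroup G)) hAcomm with hS
      have hSclosed : IsClosed (S : Set (G ⧸ commClosure (⊤ : Subgroup G))) :=
        (isCompact_range (continuous_pow p)).isClosed
      have hWclosed :
          IsClosed ((S.comap (QuotientGroup.mk' (commClosure (⊤ : Subgroup G))) :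
            Subgroup G) : Set G) := by
        rw [Subgroup.coe_comap]
        exact hSclosed.preimage continuous_quotient_mk'
      have hpowW : ∀ g : G, g ^ p ∈ S.comap (QuotientGroup.mk' (commClosure (⊤ : Subgroup G))) := by
        intro g
        simp only [Subgroup.mem_comap, map_pow]
        exact ⟨(QuotientGroup.mk' _) g, rfl⟩
      have hcommWmem : ∀ g h : G, g * h * g⁻¹ * h⁻¹ ∈
          S.comap (QuotientGroup.mk' (commClosure (⊤ : Subgroup G))) := by
        intro g h
        simp only [Subgroup.mem_comap]
        have h1 : (QuotientGroup.mk' (commClosure (⊤ : Subgroup G))) (g * h * g⁻¹ * h⁻¹) = 1 :=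
          (QuotientGroup.eq_one_iff _).mpr (hcommG g h)
        rw [h1]
        exact S.one_mem
      have hxS := my_frattini_le hp hWclosed hpowW hcommWmem hxPhi
      rw [Subgroup.mem_comap, hxc] at hxS
      obtain ⟨a, ha⟩ := hxS
      haveI : B.Normal := my_all_normal hAcomm B
      have haCB : a ∈ (C : Set (G ⧸ commClosure (⊤ : Subgroup G))) * (B : Set (G ⧸ commClosure (⊤ : Subgroup G))) := by
        rw [← Subgroup.mul_normal C B, codisjoint_iff.mp hcompl.codisjoint]
        exact Subgroup.mem_top a
      obtain ⟨c', hc', b, hb, hcb⟩ := haCB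
      have hc'p : c' ^ p = 1 := by
        have h1 : (⟨c', hc'⟩ : C) ^ p = 1 := by rw [← hcard]; exact pow_card_eq_one'
        have h2 := congrArg (Subtype.val) h1
        simpa using h2
      have hcB : (c : G ⧸ commClosure (⊤ : Subgroup G)) ∈ B := by
        have heq : (c : G ⧸ commClosure (⊤ : Subgroup G)) = b ^ p := by
          rw [← ha, ← hcb]
          show (c' * b) ^ p = b ^ p
          rw [(show Commute c' b from hAcomm c' b).mul_pow, hc'p, one_mul]
        rw [heq]
        exact pow_mem hb p
      have hcbot : (c : G ⧸ commClosure (⊤ : Subgroup G)) ∈ C ⊓ B := ⟨c.2, hcB⟩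
      rw [disjoint_iff.mp hcompl.disjoint, Subgroup.mem_bot] at hcbot
      exact hc1 (Subtype.ext hcbot)
    · intro hno x hxp
      rw [mem_frattiniOf_top_iff]
      intro M hMopen hMco
      by_contra hxM
      obtain ⟨hMnormal, hMcard⟩ := my_open_coatom_props hp hidx hMopen hMco
      haveI := hMnormal
      obtain ⟨hMpow, hMcomm⟩ := my_card_p_props hp hMcard
      have hNleM : commClosure (⊤ : Subgroup G) ≤ M := by
        apply Subgroup.topologicalClosure_minimal _ _ (M.isClosed_of_isOpen hMopen)
        rw [Subgroup.commutator_le]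
        intro g _ h _
        rw [commutatorElement_def]
        exact hMcomm g h
      set a := (QuotientGroup.mk' (commClosure (⊤ : Subgroup G))) x with ha
      have hane : a ≠ 1 := fun h => hxM (hNleM ((QuotientGroup.eq_one_iff x).mp h))
      have hap : a ^ p = 1 := by
        rw [ha, ← map_pow]
        exact (QuotientGroup.eq_one_iff _).mpr hxp
      have haord : orderOf a = p := orderOf_eq_prime hap hane
      set y := (QuotientGroup.mk' M) x with hy
      have hyne : y ≠ 1 := fun h => hxM ((QuotientGroup.eq_one_iff x).mp h)
      have hyp : y ^ p = 1 := by
        rw [hy, ← map_pow]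
        exact (QuotientGroup.eq_one_iff _).mpr (hMpow x)
      have hyord : orderOf y = p := orderOf_eq_prime hyp hyne
      haveI : Finite (G ⧸ M) := Nat.finite_of_card_ne_zero (by rw [hMcard]; exact hp.pos.ne')
      have hytop : Subgroup.zpowers y = ⊤ :=
        Subgroup.eq_top_of_card_eq _ (by rw [Nat.card_zpowers, hyord, hMcard])
      apply hno
      refine ⟨Subgroup.zpowers a, Subgroup.map (QuotientGroup.mk' (commClosure (⊤ : Subgroup G))) M,
        ⟨disjoint_iff.mpr ?_, codisjoint_iff.mpr ?_⟩, by rw [Nat.card_zpowers, haord]⟩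
      · rw [eq_bot_iff]
        rintro t ⟨htC, htB⟩
        obtain ⟨k, hk⟩ := Subgroup.mem_zpowers_iff.mp htC
        obtain ⟨m, hm, hmt⟩ := htB
        have h1 : (QuotientGroup.mk' (commClosure (⊤ : Subgroup G))) (x ^ k * m⁻¹) = 1 := by
          rw [map_mul, map_inv, map_zpow, ← ha, hk, hmt, mul_inv_cancel]
        have h2 : x ^ k * m⁻¹ ∈ M := hNleM ((QuotientGroup.eq_one_iff _).mp h1)
        have hxkM : x ^ k ∈ M := by
          have : x ^ k = x ^ k * m⁻¹ * m := by group
          rw [this]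
          exact mul_mem h2 hm
        have hzy : y ^ k = 1 := by
          rw [hy, ← map_zpow]
          exact (QuotientGroup.eq_one_iff _).mpr hxkM
        have hdvd : (p : ℤ) ∣ k := by
          rw [← hyord]
          exact orderOf_dvd_iff_zpow_eq_one.mpr hzy
        obtain ⟨t', rfl⟩ := hdvd
        rw [Subgroup.mem_bot, ← hk, zpow_mul, zpow_natCast, hap, one_zpow]
      · rw [eq_top_iff']
        intro q
        obtain ⟨g, rfl⟩ := QuotientGroup.mk'_surjective _ q
        have hgy : (QuotientGroup.mk' M) g ∈ Subgroup.zpowers y := hytop ▸ Subgroup.mem_top _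
        obtain ⟨k, hk⟩ := Subgroup.mem_zpowers_iff.mp hgy
        have h1 : (QuotientGroup.mk' M) ((x ^ k)⁻¹ * g) = 1 := by
          rw [map_mul, map_inv, map_zpow, ← hy, hk, inv_mul_cancel]
        have hmM : (x ^ k)⁻¹ * g ∈ M := (QuotientGroup.eq_one_iff _).mp h1
        have h2 : (QuotientGroup.mk' (commClosure (⊤ : Subgroup G))) g =
            a ^ k * (QuotientGroup.mk' (commClosure (⊤ : Subgroup G))) ((x ^ k)⁻¹ * g) := by
          rw [map_mul, map_inv, map_zpow, ← ha]
          group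
        rw [h2]
        exact Subgroup.mul_mem _
          (Subgroup.mem_sup_left (Subgroup.zpow_mem _ (Subgroup.mem_zpowers a) k))
          (Subgroup.mem_sup_right ⟨_, hmM, rfl⟩)
  refine ⟨hiff, fun htf => hiff.mpr ?_⟩
  rintro ⟨C, B, hcompl, hcard⟩
  haveI : Finite C := Nat.finite_of_card_ne_zero (by rw [hcard]; exact hp.pos.ne')
  haveI : Nontrivial C := Finite.one_lt_card_iff_nontrivial.mp (by rw [hcard]; exact hp.one_lt)
  obtain ⟨c, hc1⟩ := exists_ne (1 : C)
  have hcpC : c ^ p = 1 := by rw [← hcard]; exact pow_card_eq_one'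
  have hcp : (c : G ⧸ commClosure (⊤ : Subgroup G)) ^ p = 1 := by
    rw [← SubgroupClass.coe_pow, hcpC, OneMemClass.coe_one]
  have hcne : (c : G ⧸ commClosure (⊤ : Subgroup G)) ≠ 1 := fun h => hc1 (Subtype.ext h)
  exact htf _ hcne (isOfFinOrder_iff_pow_eq_one.mpr ⟨p, hp.pos, hcp⟩)
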